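/- Let G be a connected d-regular bipartite graph on n vertices with bipartition V = A ∪ B, Laplacian L with largest eigenvalue λ_max = 2d and spectral gap at least Δ to the second largest eigenvalue. For any assignment of unit vectors x₁,...,xₙ ∈ ℝᵏ, letting z = (Σ_{i∈A} xᵢ - Σ_{i∈B} xᵢ)/n and εᵢ the angle between z and xᵢ for i ∈ A, the Max-Cut_k objective satisfies Σ_{ij∈E} (1/2)(1 - xᵢ·xⱼ) ≤ λ_max n/4 - (Δ/(4π²)) Σ_{i∈A} εᵢ². -/

import Mathlib

open Real Matrix
open scoped RealInnerProductSpace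

set_option maxHeartbeats 1600000 in
theorem stmt_14 {V : Type*} [Fintype V] [DecidableEq V]
    (G : SimpleGraph V) [DecidableRel G.Adj] (A : Finset V)
    (d : ℕ) (hreg : ∀ v, G.degree v = d)
    (hbip : ∀ u v, G.Adj u v → (u ∈ A ↔ v ∉ A))
    (hconn : G.Connected)
    (Delta : ℝ) (hDelta : 0 < Delta)
    (hgap : ∀ w : V → ℝ,
      (∑ i, (if i ∈ A then (1 : ℝ) else -1) * w i) = 0 →
      w ⬝ᵥ (G.lapMatrix ℝ).mulVec w ≤ (2 * (d : ℝ) - Delta) * (w ⬝ᵥ w))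
    (k : ℕ) (x : V → EuclideanSpace ℝ (Fin k)) (hx : ∀ i, ‖x i‖ = 1)
    (z : EuclideanSpace ℝ (Fin k))
    (hz : z = ((Fintype.card V : ℝ))⁻¹ • (∑ i ∈ A, x i - ∑ i ∈ Aᶜ, x i))
    (ε : V → ℝ) (hε : ∀ i ∈ A, ε i ∈ Set.Icc 0 π ∧ ⟪x i, z⟫ = ‖z‖ * Real.cos (ε i)) :
    (1/2 : ℝ) * ∑ i, ∑ j, (if G.Adj i j then (1/2) * (1 - ⟪x i, x j⟫) else 0)
      ≤ 2 * (d : ℝ) * (Fintype.card V : ℝ) / 4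
        - (Delta / (4 * π^2)) * ∑ i ∈ A, (ε i)^2 := by
  classical
  have hV : Nonempty V := hconn.nonempty
  have hn0 : 0 < (Fintype.card V : ℝ) := by exact_mod_cast Fintype.card_pos
  set n : ℝ := (Fintype.card V : ℝ) with hn
  set L := G.lapMatrix ℝ with hL
  set s : V → ℝ := fun i => if i ∈ A then 1 else -1 with hs
  set w : Fin k → V → ℝ := fun t i => x i t with hw
  have hsum_app : ∀ (B : Finset V) (t : Fin k), (∑ i ∈ B, x i) t = ∑ i ∈ B, x i t :=
    fun B t => map_sum (EuclideanSpace.proj t : EuclideanSpace ℝ (Fin k) →L[ℝ] ℝ) x B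
  have hss : s ⬝ᵥ s = n := by
    simp only [dotProduct, hs]
    rw [show (∑ i, (if i ∈ A then (1:ℝ) else -1) * (if i ∈ A then (1:ℝ) else -1))
        = ∑ i : V, 1 from Finset.sum_congr rfl (by intro i _; by_cases h : i ∈ A <;> simp [h])]
    simp [hn]
  have hsw : ∀ t, s ⬝ᵥ w t = n * z t := by
    intro t
    have hzt : z t = n⁻¹ * ((∑ i ∈ A, x i t) - ∑ i ∈ Aᶜ, x i t) := by
      rw [hz]
      show (n⁻¹ • ((∑ i ∈ A, x i) - ∑ i ∈ Aᶜ, x i)) t = _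
      rw [PiLp.smul_apply, PiLp.sub_apply, hsum_app, hsum_app]
      simp
    rw [hzt, dotProduct]
    rw [← Finset.sum_add_sum_compl A]
    have h1 : ∀ i ∈ A, s i * w t i = x i t := by intro i hi; simp [hs, hw, hi]
    have h2 : ∀ i ∈ Aᶜ, s i * w t i = -(x i t) := by
      intro i hi; simp only [Finset.mem_compl] at hi; simp [hs, hw, hi]
    rw [Finset.sum_congr rfl h1, Finset.sum_congr rfl h2, Finset.sum_neg_distrib,
      ← mul_assoc, mul_inv_cancel₀ (ne_of_gt hn0), one_mul]
    ring
  have hLs : L *ᵥ s = (2 * (d : ℝ)) • s := by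
    funext i
    rw [hL, SimpleGraph.lapMatrix_mulVec_apply]
    have hnb : ∀ u ∈ G.neighborFinset i, s u = - s i := by
      intro u hu
      rw [SimpleGraph.mem_neighborFinset] at hu
      have := hbip i u hu
      by_cases h : i ∈ A
      · simp [hs, h, (this.mp h)]
      · have : u ∈ A := by by_contra hu'; exact h (this.mpr hu')
        simp [hs, h, this]
    rw [Finset.sum_congr rfl hnb, Finset.sum_const, SimpleGraph.card_neighborFinset_eq_degree,
      hreg i]
    simp only [Pi.smul_apply, smul_eq_mul, nsmul_eq_mul]
    ring
  -- per-coordinate bound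
  have key : ∀ t, w t ⬝ᵥ L *ᵥ w t ≤
      (2 * (d:ℝ) - Delta) * (w t ⬝ᵥ w t - n * (z t)^2) + 2 * d * n * (z t)^2 := by
    intro t
    set c : ℝ := z t with hc
    set u : V → ℝ := fun i => w t i - c * s i with hu
    have hudef : u = w t - c • s := by
      funext i; simp [hu, smul_eq_mul]
    have hwdec : w t = u + c • s := by rw [hudef]; abel
    have hsu : s ⬝ᵥ u = 0 := by
      rw [hudef, dotProduct_sub, dotProduct_smul, smul_eq_mul, hsw t, hss]
      ring
    have hus : u ⬝ᵥ s = 0 := by rw [dotProduct_comm]; exact hsu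
    have hgapu : u ⬝ᵥ L *ᵥ u ≤ (2 * (d:ℝ) - Delta) * (u ⬝ᵥ u) := by
      refine hgap u ?_
      simpa [dotProduct, hs] using hsu
    have huLs : u ⬝ᵥ L *ᵥ s = 0 := by
      rw [hLs, dotProduct_smul, smul_eq_mul, hus, mul_zero]
    have hsLu : s ⬝ᵥ L *ᵥ u = 0 := by
      have hLsymm : Lᵀ = L := by rw [hL]; exact (G.isSymm_lapMatrix ℝ).eq
      rw [dotProduct_mulVec, ← Matrix.mulVec_transpose, hLsymm, hLs,
        smul_dotProduct, smul_eq_mul, hsu, mul_zero]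
    have hsLs : s ⬝ᵥ L *ᵥ s = 2 * d * n := by
      rw [hLs, dotProduct_smul, smul_eq_mul, hss]
    have hQ : w t ⬝ᵥ L *ᵥ w t = u ⬝ᵥ L *ᵥ u + c^2 * (2 * d * n) := by
      conv_lhs => rw [hwdec]
      simp only [Matrix.mulVec_add, Matrix.mulVec_smul, add_dotProduct,
        dotProduct_add, smul_dotProduct, dotProduct_smul,
        smul_eq_mul, huLs, hsLu, hsLs]
      ring
    have huu : u ⬝ᵥ u = w t ⬝ᵥ w t - n * c^2 := by
      rw [hudef, sub_dotProduct, dotProduct_sub, dotProduct_sub,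
        smul_dotProduct, smul_dotProduct, dotProduct_smul,
        dotProduct_smul, dotProduct_comm (w t) s, hsw t, hss]
      simp only [smul_eq_mul]
      ring
    rw [hQ]
    rw [huu] at hgapu
    linarith
  -- summed quantities
  have hzz : ∑ t, (z t)^2 = ‖z‖^2 := by
    rw [← real_inner_self_eq_norm_sq]
    simp only [PiLp.inner_apply, RCLike.inner_apply, conj_trivial, sq]
  have hww : ∑ t, w t ⬝ᵥ w t = n := by
    simp only [dotProduct, hw]
    rw [Finset.sum_comm]
    have hone : ∀ i : V, ∑ t : Fin k, x i t * x i t = 1 := by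
      intro i
      have : ⟪x i, x i⟫ = ∑ t, x i t * x i t := by
        simp only [PiLp.inner_apply, RCLike.inner_apply, conj_trivial]
      rw [← this, real_inner_self_eq_norm_sq, hx i]; norm_num
    rw [Finset.sum_congr rfl fun i _ => hone i]
    simp [hn]
  have hQsum : ∑ t, w t ⬝ᵥ L *ᵥ w t ≤ 2 * d * n - Delta * (n * (1 - ‖z‖^2)) := by
    calc ∑ t, w t ⬝ᵥ L *ᵥ w t
        ≤ ∑ t, ((2 * (d:ℝ) - Delta) * (w t ⬝ᵥ w t - n * (z t)^2) + 2 * d * n * (z t)^2) :=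
          Finset.sum_le_sum fun t _ => key t
      _ = (2 * (d:ℝ) - Delta) * ((∑ t, w t ⬝ᵥ w t) - n * ∑ t, (z t)^2)
            + 2 * d * n * ∑ t, (z t)^2 := by
          rw [Finset.sum_add_distrib, ← Finset.mul_sum, ← Finset.mul_sum, Finset.sum_sub_distrib,
            ← Finset.mul_sum]
      _ = 2 * d * n - Delta * (n * (1 - ‖z‖^2)) := by rw [hww, hzz]; ring
  -- objective identity
  have hobj : (1/2 : ℝ) * ∑ i, ∑ j, (if G.Adj i j then (1/2) * (1 - ⟪x i, x j⟫) else 0)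
      = (1/4) * ∑ t, w t ⬝ᵥ L *ᵥ w t := by
    have hform : ∀ t, w t ⬝ᵥ L *ᵥ w t
        = (∑ i : V, ∑ j : V, if G.Adj i j then (w t i - w t j)^2 else 0) / 2 := by
      intro t
      rw [hL, ← Matrix.toLinearMap₂'_apply', SimpleGraph.lapMatrix_toLinearMap₂']
    have hswap : ∀ i : V, ∑ t : Fin k, ∑ j : V, (if G.Adj i j then (w t i - w t j)^2 else 0)
        = ∑ j : V, (if G.Adj i j then (2 - 2 * ⟪x i, x j⟫) else 0) := by
      intro i
      rw [Finset.sum_comm]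
      refine Finset.sum_congr rfl fun j _ => ?_
      by_cases h : G.Adj i j
      · simp only [h, if_true]
        have hinner : ⟪x i, x j⟫ = ∑ t, x i t * x j t := by
          simp [PiLp.inner_apply, RCLike.inner_apply, conj_trivial, mul_comm]
        have hni : ∑ t, x i t * x i t = 1 := by
          have : ⟪x i, x i⟫ = ∑ t, x i t * x i t := by
            simp only [PiLp.inner_apply, RCLike.inner_apply, conj_trivial]
          rw [← this, real_inner_self_eq_norm_sq, hx i]; norm_num
        have hnj : ∑ t, x j t * x j t = 1 := by
          have : ⟪x j, x j⟫ = ∑ t, x j t * x j t := by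
            simp only [PiLp.inner_apply, RCLike.inner_apply, conj_trivial]
          rw [← this, real_inner_self_eq_norm_sq, hx j]; norm_num
        have expand : ∀ t : Fin k, (w t i - w t j)^2
            = x i t * x i t - 2 * (x i t * x j t) + x j t * x j t := by
          intro t; simp only [hw]; ring
        rw [Finset.sum_congr rfl fun t _ => expand t, Finset.sum_add_distrib,
          Finset.sum_sub_distrib, hni, hnj, ← Finset.mul_sum, ← hinner]
        ring
      · simp [h]
    have hsum : ∑ t, w t ⬝ᵥ L *ᵥ w t
        = (∑ i : V, ∑ j : V, if G.Adj i j then (2 - 2 * ⟪x i, x j⟫) else 0) / 2 := by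
      rw [Finset.sum_congr rfl fun t _ => hform t, ← Finset.sum_div]
      congr 1
      rw [Finset.sum_comm]
      exact Finset.sum_congr rfl fun i _ => hswap i
    have h4 : (∑ i : V, ∑ j : V, if G.Adj i j then (2 - 2 * ⟪x i, x j⟫) else 0)
        = 4 * ∑ i : V, ∑ j : V, (if G.Adj i j then (1/2) * (1 - ⟪x i, x j⟫) else 0) := by
      rw [Finset.mul_sum]
      refine Finset.sum_congr rfl fun i _ => ?_
      rw [Finset.mul_sum]
      refine Finset.sum_congr rfl fun j _ => ?_
      by_cases h : G.Adj i j <;> simp [h] <;> ring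
    rw [hsum, h4]
    ring
  -- norm of z is at most 1
  have hz1 : ‖z‖ ≤ 1 := by
    rw [hz, norm_smul]
    have h1 : ‖(∑ i ∈ A, x i) - ∑ i ∈ Aᶜ, x i‖ ≤ n := by
      calc ‖(∑ i ∈ A, x i) - ∑ i ∈ Aᶜ, x i‖ ≤ ‖∑ i ∈ A, x i‖ + ‖∑ i ∈ Aᶜ, x i‖ :=
            norm_sub_le _ _
        _ ≤ (∑ i ∈ A, ‖x i‖) + ∑ i ∈ Aᶜ, ‖x i‖ :=
            add_le_add (norm_sum_le _ _) (norm_sum_le _ _)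
        _ = n := by
            rw [Finset.sum_congr rfl (fun i _ => hx i), Finset.sum_congr rfl (fun i _ => hx i),
              Finset.sum_const, Finset.sum_const, nsmul_eq_mul, nsmul_eq_mul, mul_one, mul_one,
              hn, ← Nat.cast_add, Finset.card_add_card_compl]
    calc ‖(n⁻¹ : ℝ)‖ * ‖(∑ i ∈ A, x i) - ∑ i ∈ Aᶜ, x i‖
        ≤ n⁻¹ * n := by
          apply mul_le_mul _ h1 (norm_nonneg _) (by positivity)
          rw [Real.norm_eq_abs, abs_of_pos (by positivity)]
      _ = 1 := by field_simp
  have hcardA : (A.card : ℝ) ≤ n := by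
    rw [hn]; exact_mod_cast Finset.card_le_univ A
  -- epsilon bound
  have heps : ∑ i ∈ A, (ε i)^2 ≤ π^2 * (n * (1 - ‖z‖^2)) := by
    have hsq : ∀ i ∈ A, (ε i)^2 ≤ π^2/2 * (1 - Real.cos (ε i)) := by
      intro i hi
      obtain ⟨⟨h0, hπ⟩, _⟩ := hε i hi
      have hcc := Real.cos_le_one_sub_mul_cos_sq (x := ε i) (by rw [abs_of_nonneg h0]; exact hπ)
      have hπ2 : (0:ℝ) < π^2 := by positivity
      have h' := mul_le_mul_of_nonneg_left hcc (by positivity : (0:ℝ) ≤ π^2/2)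
      have hid : π^2/2 * (1 - 2/π^2 * (ε i)^2) = π^2/2 - (ε i)^2 := by
        field_simp
      rw [hid] at h'
      linarith
    rcases eq_or_lt_of_le (norm_nonneg z) with hz0 | hz0
    · have hb : ∑ i ∈ A, (ε i)^2 ≤ ∑ i ∈ A, π^2 := by
        refine Finset.sum_le_sum fun i hi => ?_
        obtain ⟨⟨h0, hπ⟩, _⟩ := hε i hi
        exact pow_le_pow_left₀ h0 hπ 2
      rw [Finset.sum_const, nsmul_eq_mul] at hb
      calc ∑ i ∈ A, (ε i)^2 ≤ (A.card : ℝ) * π^2 := hb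
        _ ≤ π^2 * (n * (1 - ‖z‖^2)) := by rw [← hz0]; nlinarith [Real.pi_pos]
    · have hinner_sum : n * ‖z‖^2 = (∑ i ∈ A, ⟪x i, z⟫) - ∑ i ∈ Aᶜ, ⟪x i, z⟫ := by
        have hnz : (n : ℝ) • z = (∑ i ∈ A, x i) - ∑ i ∈ Aᶜ, x i := by
          rw [hz, smul_smul, mul_inv_cancel₀ (ne_of_gt hn0), one_smul]
        have h2 : ⟪(n : ℝ) • z, z⟫ = n * ‖z‖^2 := by
          rw [real_inner_smul_left, real_inner_self_eq_norm_sq]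
        rw [← h2, hnz, inner_sub_left, sum_inner, sum_inner]
      have hbound : ∑ i ∈ Aᶜ, (- ⟪x i, z⟫) ≤ (n - A.card) * ‖z‖ := by
        have hb1 : ∀ i ∈ Aᶜ, - ⟪x i, z⟫ ≤ ‖z‖ := by
          intro i _
          have h3 := abs_real_inner_le_norm (x i) z
          rw [hx i, one_mul] at h3
          linarith [(abs_le.mp h3).1]
        calc ∑ i ∈ Aᶜ, (- ⟪x i, z⟫) ≤ ∑ i ∈ Aᶜ, ‖z‖ := Finset.sum_le_sum hb1
          _ = (Aᶜ.card : ℝ) * ‖z‖ := by rw [Finset.sum_const, nsmul_eq_mul]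
          _ = (n - A.card) * ‖z‖ := by
              congr 1
              rw [Finset.card_compl, hn]
              have := Finset.card_le_univ A
              push_cast [Nat.cast_sub this]
              ring
      have hcos_sum : n * ‖z‖ ≤ (∑ i ∈ A, Real.cos (ε i)) + (n - A.card) := by
        have hA : ∑ i ∈ A, ⟪x i, z⟫ = ‖z‖ * ∑ i ∈ A, Real.cos (ε i) := by
          rw [Finset.mul_sum]
          exact Finset.sum_congr rfl fun i hi => (hε i hi).2
        have hineq : n * ‖z‖^2 ≤ ‖z‖ * (∑ i ∈ A, Real.cos (ε i)) + (n - A.card) * ‖z‖ := by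
          rw [hinner_sum, hA]
          have hneg : - ∑ i ∈ Aᶜ, ⟪x i, z⟫ = ∑ i ∈ Aᶜ, (- ⟪x i, z⟫) := by
            rw [Finset.sum_neg_distrib]
          linarith [hbound]
        nlinarith [hz0]
      have h1cos : ∑ i ∈ A, (1 - Real.cos (ε i)) ≤ n * (1 - ‖z‖) := by
        rw [Finset.sum_sub_distrib, Finset.sum_const, nsmul_eq_mul, mul_one]
        linarith
      calc ∑ i ∈ A, (ε i)^2 ≤ ∑ i ∈ A, π^2/2 * (1 - Real.cos (ε i)) :=
            Finset.sum_le_sum hsq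
        _ = π^2/2 * ∑ i ∈ A, (1 - Real.cos (ε i)) := by rw [Finset.mul_sum]
        _ ≤ π^2/2 * (n * (1 - ‖z‖)) := by
            apply mul_le_mul_of_nonneg_left h1cos (by positivity)
        _ ≤ π^2 * (n * (1 - ‖z‖^2)) := by
            have hkey : 0 ≤ n * (1 - ‖z‖) * (1 + 2*‖z‖) :=
              mul_nonneg (mul_nonneg hn0.le (by linarith)) (by linarith [hz0.le])
            have e : π^2 * (n * (1 - ‖z‖^2)) - π^2/2 * (n * (1 - ‖z‖))
                = π^2/2 * (n * (1 - ‖z‖) * (1 + 2*‖z‖)) := by ring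
            nlinarith [mul_nonneg (by positivity : (0:ℝ) ≤ π^2/2) hkey]
  -- combine
  rw [hobj]
  have hπ2 : (0:ℝ) < π^2 := by positivity
  have hfinal : Delta / (4 * π^2) * ∑ i ∈ A, (ε i)^2 ≤ Delta / 4 * (n * (1 - ‖z‖^2)) := by
    rw [div_mul_eq_mul_div, div_le_iff₀ (by positivity)]
    calc Delta * ∑ i ∈ A, (ε i)^2 ≤ Delta * (π^2 * (n * (1 - ‖z‖^2))) :=
          mul_le_mul_of_nonneg_left heps hDelta.le
      _ = Delta / 4 * (n * (1 - ‖z‖^2)) * (4 * π^2) := by ring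
  linarith [hQsum, hfinal]
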